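/- For the B_n basic invariants p_a(x) = s_a(x_1²,...,x_n²), for each a = 1,...,n and each pair i < j, the polynomial x_i·(∂p_a/∂x_i) − x_j·(∂p_a/∂x_j) is divisible by (x_i² − x_j²), and 4·Σ_{1≤i<j≤n} [x_i·(∂p_a/∂x_i) − x_j·(∂p_a/∂x_j)]/(x_i² − x_j²) = 4(n−a+1)(n−a)·p_{a−1}(x), with p_0 = 1. -/

import Mathlib

open MvPolynomial Finset

/-- The basic invariants of `Bₙ`: `p a = sₐ(x₁², …, xₙ²)`. -/
noncomputable def BnInvariant (n c : ℕ) : MvPolynomial (Fin n) ℝ :=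
  bind₁ (fun i : Fin n => (X i : MvPolynomial (Fin n) ℝ) ^ 2) (esymm (Fin n) ℝ c)

namespace BnAux

variable {n : ℕ}

/-- The elementary symmetric polynomial in the squared variables indexed by `S`. -/
noncomputable def E (S : Finset (Fin n)) (k : ℕ) : MvPolynomial (Fin n) ℝ :=
  ∑ s ∈ S.powersetCard k, ∏ l ∈ s, X l ^ 2

lemma E_zero (S : Finset (Fin n)) : E S 0 = 1 := by
  simp [E]

lemma E_rec {i : Fin n} {S : Finset (Fin n)} (h : i ∉ S) (k : ℕ) :
    E (insert i S) (k + 1) = E S (k + 1) + X i ^ 2 * E S k := by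
  rw [E, powersetCard_succ_insert h, sum_union, sum_image]
  · rw [E, E, mul_sum]
    congr 1
    refine sum_congr rfl fun s hs => ?_
    rw [prod_insert]
    exact fun hi => h ((mem_powersetCard.1 hs).1 hi)
  · intro s hs t ht hst
    have hi : i ∉ s := fun hi => h ((mem_powersetCard.1 hs).1 hi)
    have hi' : i ∉ t := fun hi => h ((mem_powersetCard.1 ht).1 hi)
    have := congrArg (fun u => Finset.erase u i) hst
    simpa [Finset.erase_insert hi, Finset.erase_insert hi'] using this
  · rw [disjoint_right]
    intro s hs
    simp only [mem_image] at hs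
    obtain ⟨t, ht, rfl⟩ := hs
    intro hmem
    exact h ((mem_powersetCard.1 hmem).1 (mem_insert_self i t))

lemma pderiv_prod_sq {i : Fin n} {s : Finset (Fin n)} (h : i ∉ s) :
    pderiv i (∏ l ∈ s, (X l : MvPolynomial (Fin n) ℝ) ^ 2) = 0 := by
  classical
  induction s using Finset.induction_on with
  | empty => simp
  | insert a t hx ih =>
    rw [prod_insert hx, pderiv_mul, ih (fun hi => h (mem_insert_of_mem hi)),
      pderiv_pow, pderiv_X_of_ne (fun hai : a = i => h (hai ▸ mem_insert_self a t))]
    ring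

lemma pderiv_E {i : Fin n} {S : Finset (Fin n)} (h : i ∉ S) (k : ℕ) :
    pderiv i (E S k) = 0 := by
  rw [E, map_sum]
  refine Finset.sum_eq_zero fun s hs => ?_
  exact pderiv_prod_sq fun hi => h ((mem_powersetCard.1 hs).1 hi)

lemma Bn_eq (c : ℕ) : BnInvariant n c = E univ c := by
  simp [BnInvariant, esymm, E, map_sum, map_prod]

lemma X_mul_pderiv (i : Fin n) (b : ℕ) :
    X i * pderiv i (BnInvariant n (b + 1)) = 2 * X i ^ 2 * E (univ.erase i) b := by
  have hE : E (univ : Finset (Fin n)) (b + 1)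
      = E (univ.erase i) (b + 1) + X i ^ 2 * E (univ.erase i) b := by
    conv_lhs => rw [(insert_erase (mem_univ i)).symm]
    exact E_rec (notMem_erase i univ) b
  rw [Bn_eq, hE, map_add, pderiv_E (notMem_erase i univ),
    pderiv_mul, pderiv_E (notMem_erase i univ), pderiv_pow, pderiv_X_self]
  ring

lemma div_key {i j : Fin n} (hij : i ≠ j) (b : ℕ) :
    2 * X i ^ 2 * E (univ.erase i) b - 2 * X j ^ 2 * E (univ.erase j) b
      = (X i ^ 2 - X j ^ 2) * (2 * E ((univ.erase i).erase j) b) := by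
  cases b with
  | zero => simp [E_zero]; ring
  | succ c =>
    have hcomm : (univ.erase j).erase i = (univ.erase i).erase j := erase_right_comm
    have h1 : E (univ.erase i) (c + 1)
        = E ((univ.erase i).erase j) (c + 1) + X j ^ 2 * E ((univ.erase i).erase j) c := by
      conv_lhs => rw [(insert_erase (show j ∈ univ.erase i by simp [hij.symm])).symm]
      exact E_rec (notMem_erase j _) c
    have h2 : E (univ.erase j) (c + 1)
        = E ((univ.erase i).erase j) (c + 1) + X i ^ 2 * E ((univ.erase i).erase j) c := by
      conv_lhs => rw [(insert_erase (show i ∈ univ.erase j by simp [hij])).symm]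
      rw [hcomm]
      exact E_rec (hcomm ▸ notMem_erase i _) c
    rw [h1, h2]
    ring

lemma E_erase_erase (i j : Fin n) (b : ℕ) :
    E ((univ.erase i).erase j) b
      = ∑ s ∈ (univ : Finset (Fin n)).powersetCard b,
          if i ∉ s ∧ j ∉ s then ∏ l ∈ s, (X l : MvPolynomial (Fin n) ℝ) ^ 2 else 0 := by
  rw [E, ← Finset.sum_filter]
  congr 1
  ext s
  simp only [mem_filter, mem_powersetCard, subset_erase, subset_univ, true_and]
  tauto

lemma two_mul_count (t : Finset (Fin n)) :
    2 * ∑ i : Fin n, ∑ j ∈ Ioi i, (if i ∈ t ∧ j ∈ t then 1 else 0)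
      = t.card * (t.card - 1) := by
  have hIoi : ∀ i : Fin n, (∑ j ∈ Ioi i, (if i ∈ t ∧ j ∈ t then 1 else 0))
      = ∑ j : Fin n, if i < j ∧ i ∈ t ∧ j ∈ t then 1 else 0 := by
    intro i
    rw [show Ioi i = univ.filter (fun j => i < j) by ext j; simp, Finset.sum_filter]
    exact sum_congr rfl fun j _ => by split_ifs <;> simp_all
  simp_rw [hIoi]
  set N : ℕ := ∑ i : Fin n, ∑ j : Fin n, if i < j ∧ i ∈ t ∧ j ∈ t then 1 else 0 with hN
  have hswap : N = ∑ i : Fin n, ∑ j : Fin n, if j < i ∧ i ∈ t ∧ j ∈ t then 1 else 0 := by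
    rw [hN, Finset.sum_comm]
    exact sum_congr rfl fun i _ => sum_congr rfl fun j _ => if_congr (by tauto) rfl rfl
  have h2 : 2 * N = ∑ i : Fin n, ∑ j : Fin n, if i ≠ j ∧ i ∈ t ∧ j ∈ t then 1 else 0 := by
    rw [two_mul]
    nth_rewrite 2 [hswap]
    rw [← Finset.sum_add_distrib]
    refine sum_congr rfl fun i _ => ?_
    rw [← Finset.sum_add_distrib]
    refine sum_congr rfl fun j _ => ?_
    by_cases hP : i ∈ t ∧ j ∈ t
    · rcases lt_trichotomy i j with h | h | h
      · simp [h, hP, h.ne, not_lt_of_gt h]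
      · simp [h, hP]
      · simp [h, hP, h.ne', not_lt_of_gt h]
    · simp [hP]
  rw [h2]
  have hinner : ∀ i : Fin n, (∑ j : Fin n, if i ≠ j ∧ i ∈ t ∧ j ∈ t then 1 else 0)
      = if i ∈ t then t.card - 1 else 0 := by
    intro i
    by_cases hi : i ∈ t
    · rw [← Finset.card_filter]
      have : (univ.filter fun j => i ≠ j ∧ i ∈ t ∧ j ∈ t) = t.erase i := by
        ext j
        simp [mem_erase, hi, ne_comm, and_comm]
      rw [this, card_erase_of_mem hi, if_pos hi]
    · simp [hi]
  simp_rw [hinner]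
  rw [Finset.sum_ite_mem, univ_inter, Finset.sum_const, smul_eq_mul]

end BnAux

open BnAux in
theorem Bn_long_root_lambda (n a : ℕ) (ha : 1 ≤ a) (han : a ≤ n) :
    ∃ Q : Fin n → Fin n → MvPolynomial (Fin n) ℝ,
      (∀ i j : Fin n, i < j →
          X i * pderiv i (BnInvariant n a) - X j * pderiv j (BnInvariant n a)
            = ((X i) ^ 2 - (X j) ^ 2) * Q i j)
      ∧ (4 : MvPolynomial (Fin n) ℝ) * ∑ i : Fin n, ∑ j ∈ Finset.Ioi i, Q i j
          = C ((4 * (n - a + 1) * (n - a) : ℕ) : ℝ) * BnInvariant n (a - 1) := by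
  obtain ⟨b, rfl⟩ : ∃ b, a = b + 1 := ⟨a - 1, (Nat.succ_pred_eq_of_pos ha).symm⟩
  refine ⟨fun i j => 2 * E ((univ.erase i).erase j) b, fun i j hij => ?_, ?_⟩
  · rw [X_mul_pderiv, X_mul_pderiv]
    exact div_key (ne_of_lt hij) b
  · -- the sum identity
    have hb1 : b + 1 ≤ n := han
    have key : ∀ s ∈ (univ : Finset (Fin n)).powersetCard b,
        (2 : MvPolynomial (Fin n) ℝ) * ∑ i : Fin n, ∑ j ∈ Ioi i,
            (if i ∉ s ∧ j ∉ s then ∏ l ∈ s, (X l : MvPolynomial (Fin n) ℝ) ^ 2 else 0)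
          = (((n - b) * (n - b - 1) : ℕ) : MvPolynomial (Fin n) ℝ) *
              ∏ l ∈ s, (X l : MvPolynomial (Fin n) ℝ) ^ 2 := by
      intro s hs
      have hcard : s.card = b := (mem_powersetCard.1 hs).2
      have hmem : ∀ i : Fin n, (i ∉ s) ↔ i ∈ sᶜ := fun i => (Finset.mem_compl).symm
      have hite : ∀ i j : Fin n, (if i ∉ s ∧ j ∉ s then ∏ l ∈ s, (X l : MvPolynomial (Fin n) ℝ) ^ 2 else 0)
          = ((if i ∈ sᶜ ∧ j ∈ sᶜ then 1 else 0 : ℕ) : MvPolynomial (Fin n) ℝ) *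
              ∏ l ∈ s, (X l : MvPolynomial (Fin n) ℝ) ^ 2 := by
        intro i j
        simp only [← hmem]
        split_ifs <;> simp
      simp_rw [hite, ← Finset.sum_mul, ← mul_assoc]
      congr 1
      have hc : (sᶜ : Finset (Fin n)).card = n - b := by
        rw [Finset.card_compl, hcard, Fintype.card_fin]
      have := two_mul_count (n := n) sᶜ
      rw [hc] at this
      rw [show ((2 : MvPolynomial (Fin n) ℝ)) = ((2 : ℕ) : MvPolynomial (Fin n) ℝ) by push_cast; ring]
      push_cast [← this]
      ring
    have hswap : (∑ i : Fin n, ∑ j ∈ Ioi i,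
          (2 * E ((univ.erase i).erase j) b : MvPolynomial (Fin n) ℝ))
        = ∑ s ∈ (univ : Finset (Fin n)).powersetCard b,
            (2 : MvPolynomial (Fin n) ℝ) * ∑ i : Fin n, ∑ j ∈ Ioi i,
              (if i ∉ s ∧ j ∉ s then ∏ l ∈ s, (X l : MvPolynomial (Fin n) ℝ) ^ 2 else 0) := by
      simp_rw [E_erase_erase, Finset.mul_sum]
      have hc : ∀ i : Fin n, (∑ j ∈ Ioi i, ∑ s ∈ (univ : Finset (Fin n)).powersetCard b,
            (if i ∉ s ∧ j ∉ s then 2 * ∏ l ∈ s, (X l : MvPolynomial (Fin n) ℝ) ^ 2 else 0))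
          = ∑ s ∈ (univ : Finset (Fin n)).powersetCard b, ∑ j ∈ Ioi i,
            (if i ∉ s ∧ j ∉ s then 2 * ∏ l ∈ s, (X l : MvPolynomial (Fin n) ℝ) ^ 2 else 0) :=
        fun i => Finset.sum_comm
      simp_rw [mul_ite, mul_zero] at *
      rw [show (∑ i : Fin n, ∑ j ∈ Ioi i, ∑ s ∈ (univ : Finset (Fin n)).powersetCard b,
            (if i ∉ s ∧ j ∉ s then 2 * ∏ l ∈ s, (X l : MvPolynomial (Fin n) ℝ) ^ 2 else 0))
          = ∑ i : Fin n, ∑ s ∈ (univ : Finset (Fin n)).powersetCard b, ∑ j ∈ Ioi i,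
            (if i ∉ s ∧ j ∉ s then 2 * ∏ l ∈ s, (X l : MvPolynomial (Fin n) ℝ) ^ 2 else 0)
        from sum_congr rfl fun i _ => hc i]
      rw [Finset.sum_comm]
    rw [hswap, Finset.sum_congr rfl key, ← Finset.mul_sum, ← mul_assoc]
    have hcoeff : (4 : MvPolynomial (Fin n) ℝ) * (((n - b) * (n - b - 1) : ℕ) : MvPolynomial (Fin n) ℝ)
        = C ((4 * (n - (b + 1) + 1) * (n - (b + 1)) : ℕ) : ℝ) := by
      have e1 : n - (b + 1) + 1 = n - b := by omega
      have e2 : n - (b + 1) = n - b - 1 := by omega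
      rw [e1, e2, C_eq_coe_nat]
      push_cast
      ring
    rw [hcoeff, show b + 1 - 1 = b from rfl, Bn_eq, E]
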